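/- Let D ≥ 1, let c₁,…,c_D be nonzero real numbers, let V₀ be the D×D real matrix with all diagonal entries 0, entries 1 on the sub- and super-diagonal and 0 elsewhere, and let E ∈ ℝ. For ω = (ω₁,…,ω_D) ∈ {0,1}^D set M_ω(E) = V₀ + diag(c₁ω₁,…,c_Dω_D) − E·I_D and X_ω(E) = [[0, I_D],[M_ω(E), 0]] ∈ M_{2D}(ℝ). Then the Lie subalgebra of M_{2D}(ℝ) (with bracket [A,B] = AB − BA) generated by the set {X_ω(E) : ω ∈ {0,1}^D} is equal to 𝔰𝔭_D(ℝ). -/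

import Mathlib

open scoped Matrix

attribute [local instance 100] LieRing.ofAssociativeRing

/-- The standard symplectic form matrix `J = [[0, -I],[I, 0]]`. -/
def Jmat (D : ℕ) : Matrix (Fin D ⊕ Fin D) (Fin D ⊕ Fin D) ℝ :=
  Matrix.fromBlocks 0 (-1) 1 0

/-- The symplectic Lie algebra `𝔰𝔭_D(ℝ)`, as a set of `2D × 2D` real matrices `X` with
`Xᵀ J + J X = 0`. -/
def spSet (D : ℕ) : Set (Matrix (Fin D ⊕ Fin D) (Fin D ⊕ Fin D) ℝ) :=
  {X | Xᵀ * Jmat D + Jmat D * X = 0}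

/-- The free interaction matrix `V₀`: zero diagonal, `1` on the sub- and super-diagonal. -/
def V0 (D : ℕ) : Matrix (Fin D) (Fin D) ℝ :=
  Matrix.of fun i j => if (i : ℕ) + 1 = (j : ℕ) ∨ (j : ℕ) + 1 = (i : ℕ) then 1 else 0

/-- `M_ω(E) = V₀ + diag(c₁ω₁,…,c_Dω_D) − E·I`. -/
noncomputable def Mmat (D : ℕ) (c : Fin D → ℝ) (E : ℝ) (v : Fin D → ℝ) :
    Matrix (Fin D) (Fin D) ℝ :=
  V0 D + Matrix.diagonal (fun i => c i * v i) - E • 1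

/-- `X_ω(E) = [[0, I],[M_ω(E), 0]]`. -/
noncomputable def Xmat (D : ℕ) (c : Fin D → ℝ) (E : ℝ) (v : Fin D → ℝ) :
    Matrix (Fin D ⊕ Fin D) (Fin D ⊕ Fin D) ℝ :=
  Matrix.fromBlocks 0 1 (Mmat D c E v) 0

open Matrix


lemma V0_transpose (D : ℕ) : (V0 D)ᵀ = V0 D := by
  ext i j; simp [V0, transpose_apply, or_comm]

lemma Mmat_transpose (D : ℕ) (c : Fin D → ℝ) (E : ℝ) (v : Fin D → ℝ) :
    (Mmat D c E v)ᵀ = Mmat D c E v := by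
  simp [Mmat, transpose_sub, transpose_add, V0_transpose, diagonal_transpose, transpose_smul]

/-- `spSet` as a Lie subalgebra. -/
def spLie (D : ℕ) : LieSubalgebra ℝ (Matrix (Fin D ⊕ Fin D) (Fin D ⊕ Fin D) ℝ) where
  carrier := spSet D
  add_mem' {X Y} hX hY := by
    have hX' : Xᵀ * Jmat D + Jmat D * X = 0 := hX
    have hY' : Yᵀ * Jmat D + Jmat D * Y = 0 := hY
    show (X + Y)ᵀ * Jmat D + Jmat D * (X + Y) = 0
    rw [transpose_add, add_mul, mul_add]
    calc Xᵀ * Jmat D + Yᵀ * Jmat D + (Jmat D * X + Jmat D * Y)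
        = (Xᵀ * Jmat D + Jmat D * X) + (Yᵀ * Jmat D + Jmat D * Y) := by abel
      _ = 0 := by rw [hX', hY', add_zero]
  zero_mem' := by show (0:Matrix _ _ ℝ)ᵀ * Jmat D + Jmat D * 0 = 0; simp
  smul_mem' r X hX := by
    have hX' : Xᵀ * Jmat D + Jmat D * X = 0 := hX
    show (r • X)ᵀ * Jmat D + Jmat D * (r • X) = 0
    rw [transpose_smul, smul_mul_assoc, mul_smul_comm, ← smul_add, hX', smul_zero]
  lie_mem' {X Y} hX hY := by
    have hX' : Xᵀ * Jmat D = -(Jmat D * X) := eq_neg_of_add_eq_zero_left hX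
    have hY' : Yᵀ * Jmat D = -(Jmat D * Y) := eq_neg_of_add_eq_zero_left hY
    show ⁅X, Y⁆ᵀ * Jmat D + Jmat D * ⁅X, Y⁆ = 0
    rw [Ring.lie_def, transpose_sub, transpose_mul, transpose_mul]
    have e1 : Yᵀ * Xᵀ * Jmat D = Jmat D * Y * X := by
      rw [mul_assoc, hX', mul_neg, ← mul_assoc, hY', neg_mul, neg_neg]
    have e2 : Xᵀ * Yᵀ * Jmat D = Jmat D * X * Y := by
      rw [mul_assoc, hY', mul_neg, ← mul_assoc, hX', neg_mul, neg_neg]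
    rw [sub_mul, e1, e2, mul_sub]
    rw [mul_assoc, mul_assoc]
    abel

lemma Xmat_mem_spSet (D : ℕ) (c : Fin D → ℝ) (E : ℝ) (v : Fin D → ℝ) :
    Xmat D c E v ∈ spSet D := by
  show (Xmat D c E v)ᵀ * Jmat D + Jmat D * Xmat D c E v = 0
  rw [Xmat, Jmat, fromBlocks_transpose, fromBlocks_multiply, fromBlocks_multiply,
    fromBlocks_add]
  simp [Mmat_transpose]
open Matrix

abbrev Mat (D : ℕ) := Matrix (Fin D) (Fin D) ℝ
abbrev Mat2 (D : ℕ) := Matrix (Fin D ⊕ Fin D) (Fin D ⊕ Fin D) ℝ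

variable {D : ℕ}

/-- H block embedding as a linear map. -/
def HbL (D : ℕ) : Mat D →ₗ[ℝ] Mat2 D where
  toFun A := fromBlocks A 0 0 (-Aᵀ)
  map_add' A B := by simp [fromBlocks_add, transpose_add, neg_add]; abel
  map_smul' r A := by simp [fromBlocks_smul, transpose_smul, smul_neg]

def UbL (D : ℕ) : Mat D →ₗ[ℝ] Mat2 D where
  toFun B := fromBlocks 0 B 0 0
  map_add' A B := by simp [fromBlocks_add]
  map_smul' r A := by simp [fromBlocks_smul]

def LbL (D : ℕ) : Mat D →ₗ[ℝ] Mat2 D where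
  toFun C := fromBlocks 0 0 C 0
  map_add' A B := by simp [fromBlocks_add]
  map_smul' r A := by simp [fromBlocks_smul]

notation "Hb" => HbL _
notation "Ub" => UbL _
notation "Lb" => LbL _

def Xb (M : Mat D) : Mat2 D := fromBlocks 0 1 M 0

lemma HbL_apply (A : Mat D) : Hb A = fromBlocks A 0 0 (-Aᵀ) := rfl
lemma UbL_apply (B : Mat D) : Ub B = fromBlocks 0 B 0 0 := rfl
lemma LbL_apply (C : Mat D) : Lb C = fromBlocks 0 0 C 0 := rfl

lemma lie_Xb_Lb (M S : Mat D) : ⁅Xb M, Lb S⁆ = fromBlocks S 0 0 (-S) := by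
  simp only [Ring.lie_def, Xb, LbL_apply, fromBlocks_multiply]
  rw [sub_eq_add_neg, fromBlocks_neg, fromBlocks_add]
  simp
  repeat' apply And.intro
  all_goals first | abel | rfl | trivial
--

lemma lie_Hb_Xb (A M : Mat D) :
    ⁅Hb A, Xb M⁆ = Ub (A + Aᵀ) + Lb (-(Aᵀ*M + M*A)) := by
  simp only [Ring.lie_def, Xb, HbL_apply, UbL_apply, LbL_apply, fromBlocks_multiply,
    fromBlocks_add]
  rw [sub_eq_add_neg, fromBlocks_neg, fromBlocks_add]
  simp
  repeat' apply And.intro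
  all_goals first | abel | rfl | trivial

lemma lie_UL_Xb (B C M : Mat D) :
    ⁅Ub B + Lb C, Xb M⁆ = fromBlocks (B*M - C) 0 0 (C - M*B) := by
  simp only [Ring.lie_def, Xb, UbL_apply, LbL_apply, fromBlocks_add, fromBlocks_multiply]
  rw [sub_eq_add_neg, fromBlocks_neg, fromBlocks_add]
  simp
  repeat' apply And.intro
  all_goals first | abel | rfl | trivial

lemma lie_Hb_Hb (A B : Mat D) : ⁅Hb A, Hb B⁆ = Hb (A*B - B*A) := by
  simp only [Ring.lie_def, HbL_apply, fromBlocks_multiply]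
  rw [sub_eq_add_neg, fromBlocks_neg, fromBlocks_add]
  simp [transpose_sub, transpose_mul]
  repeat' apply And.intro
  all_goals first | abel | rfl | trivial

lemma lie_Hb_Lb (A C : Mat D) : ⁅Hb A, Lb C⁆ = Lb (-(Aᵀ*C + C*A)) := by
  simp only [Ring.lie_def, HbL_apply, LbL_apply, fromBlocks_multiply]
  rw [sub_eq_add_neg, fromBlocks_neg, fromBlocks_add]
  simp
  repeat' apply And.intro
  all_goals first | abel | rfl | trivial

lemma lie_Hb_Ub (A B : Mat D) : ⁅Hb A, Ub B⁆ = Ub (A*B + B*Aᵀ) := by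
  simp only [Ring.lie_def, HbL_apply, UbL_apply, fromBlocks_multiply]
  rw [sub_eq_add_neg, fromBlocks_neg, fromBlocks_add]
  simp
  repeat' apply And.intro
  all_goals first | abel | rfl | trivial

lemma sp_decomp {D : ℕ} (X : Mat2 D) (hX : X ∈ spSet D) :
    ∃ A B C : Mat D, Bᵀ = B ∧ Cᵀ = C ∧ X = Hb A + Ub B + Lb C := by
  have hX0 : X = fromBlocks X.toBlocks₁₁ X.toBlocks₁₂ X.toBlocks₂₁ X.toBlocks₂₂ :=
    (fromBlocks_toBlocks X).symm
  set A := X.toBlocks₁₁; set B := X.toBlocks₁₂; set C := X.toBlocks₂₁; set Dd := X.toBlocks₂₂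
  have hX' : Xᵀ * Jmat D + Jmat D * X = 0 := hX
  rw [hX0, Jmat, fromBlocks_transpose, fromBlocks_multiply, fromBlocks_multiply,
    fromBlocks_add, ← fromBlocks_zero, fromBlocks_inj] at hX'
  obtain ⟨h1, h2, h3, h4⟩ := hX'
  simp only [mul_zero, zero_add, add_zero, mul_one, mul_neg_one, zero_mul, mul_zero,
    one_mul, neg_one_mul, zero_mul, add_zero] at h1 h2 h3 h4
  have hB : Bᵀ = B := neg_add_eq_zero.mp h4
  have hC : Cᵀ = C := by
    have := add_neg_eq_zero.mp h1; exact this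
  have hDd : Dd = -Aᵀ := by
    rw [← neg_neg Dd, ← neg_add_eq_zero.mp h2]
  refine ⟨A, B, C, hB, hC, ?_⟩
  rw [hX0, hDd]
  simp only [HbL_apply, UbL_apply, LbL_apply, fromBlocks_add]
  simp

/-- std basis matrix with entry 1 -/
def Eb {D : ℕ} (i j : Fin D) : Mat D := Matrix.single i j (1:ℝ)

lemma Eb_transpose {D : ℕ} (i j : Fin D) : (Eb i j)ᵀ = Eb j i := by
  ext a b
  simp [Eb, Matrix.single, transpose_apply, and_comm]

lemma Eb_mul_mul {D : ℕ} (X : Mat D) (i j : Fin D) :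
    Eb i i * X * Eb j j = X i j • Eb i j := by
  ext a b
  simp [Eb, mul_apply, Matrix.single, Finset.sum_ite_eq, ite_and]
  by_cases h1 : i = a <;> by_cases h2 : j = b <;> simp [h1, h2]

lemma Eb_mul_same {D : ℕ} (i j k : Fin D) : Eb i j * Eb j k = Eb i k := by
  rw [Eb, Eb, single_mul_single_same, mul_one]; rfl

lemma Eb_mul_ne {D : ℕ} {j k : Fin D} (h : j ≠ k) (i l : Fin D) : Eb i j * Eb k l = 0 :=
  single_mul_single_of_ne _ _ _ _ h _

lemma Eb_smul_rep {D : ℕ} (S : Mat D) : ∑ k : Fin D, ∑ l : Fin D, S k l • Eb k l = S := by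
  conv_rhs => rw [matrix_eq_sum_single S]
  refine Finset.sum_congr rfl fun k _ => Finset.sum_congr rfl fun l _ => ?_
  rw [Eb, smul_single, smul_eq_mul, mul_one]

lemma sym_span {D : ℕ} (f : Mat D →ₗ[ℝ] Mat2 D) (G : LieSubalgebra ℝ (Mat2 D))
    (hf : ∀ k l : Fin D, f (Eb k l + Eb l k) ∈ G) (S : Mat D) (hS : Sᵀ = S) : f S ∈ G := by
  have h2 : ∑ k : Fin D, ∑ l : Fin D, S k l • Eb l k = S := by
    rw [Finset.sum_comm]
    calc ∑ l : Fin D, ∑ k : Fin D, S k l • Eb l k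
        = ∑ l : Fin D, ∑ k : Fin D, Sᵀ l k • Eb l k := by
          refine Finset.sum_congr rfl fun l _ => Finset.sum_congr rfl fun k _ => by
            rw [transpose_apply]
      _ = Sᵀ := Eb_smul_rep Sᵀ
      _ = S := hS
  have hrep : S = (2:ℝ)⁻¹ • ∑ k : Fin D, ∑ l : Fin D, S k l • (Eb k l + Eb l k) := by
    have : ∑ k : Fin D, ∑ l : Fin D, S k l • (Eb k l + Eb l k)
        = (∑ k : Fin D, ∑ l : Fin D, S k l • Eb k l)
          + ∑ k : Fin D, ∑ l : Fin D, S k l • Eb l k := by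
      rw [← Finset.sum_add_distrib]
      refine Finset.sum_congr rfl fun k _ => ?_
      rw [← Finset.sum_add_distrib]
      exact Finset.sum_congr rfl fun l _ => smul_add _ _ _
    rw [this, Eb_smul_rep, h2]
    rw [← two_smul ℝ S, smul_smul]
    norm_num
  rw [hrep]
  rw [LinearMap.map_smul, map_sum]
  refine G.smul_mem _ (sum_mem fun k _ => ?_)
  rw [map_sum]
  exact sum_mem fun l _ => by rw [LinearMap.map_smul]; exact G.smul_mem _ (hf k l)


/-- The Lie subalgebra of `M_{2D}(ℝ)` generated by the matrices `X_ω(E)` for `ω ∈ {0,1}^D`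
is the full symplectic Lie algebra `𝔰𝔭_D(ℝ)`. -/
theorem lieSpan_Xomega_eq_sp (D : ℕ) (hD : 1 ≤ D) (c : Fin D → ℝ) (hc : ∀ i, c i ≠ 0)
    (E : ℝ) :
    (LieSubalgebra.lieSpan ℝ (Matrix (Fin D ⊕ Fin D) (Fin D ⊕ Fin D) ℝ)
        {X | ∃ v : Fin D → ℝ, (∀ i, v i = 0 ∨ v i = 1) ∧ X = Xmat D c E v} :
      Set (Matrix (Fin D ⊕ Fin D) (Fin D ⊕ Fin D) ℝ)) = spSet D := by
  set G := LieSubalgebra.lieSpan ℝ (Matrix (Fin D ⊕ Fin D) (Fin D ⊕ Fin D) ℝ)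
      {X | ∃ v : Fin D → ℝ, (∀ i, v i = 0 ∨ v i = 1) ∧ X = Xmat D c E v} with hGdef
  apply subset_antisymm
  · -- easy direction
    have hle : G ≤ spLie D := by
      apply LieSubalgebra.lieSpan_le.mpr
      rintro X ⟨v, hv, rfl⟩
      exact Xmat_mem_spSet D c E v
    exact fun x hx => hle hx
  · -- hard direction
    intro X hX
    set M0 : Mat D := Mmat D c E (fun _ => 0) with hM0def
    have hM0T : M0ᵀ = M0 := Mmat_transpose D c E _
    have hM0V : M0 = V0 D - E • (1 : Mat D) := by
      simp [hM0def, Mmat]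
    -- the generators
    have h0 : Xb M0 ∈ G := by
      apply LieSubalgebra.subset_lieSpan
      exact ⟨fun _ => 0, fun i => Or.inl rfl, rfl⟩
    -- step 1 : diagonal lower blocks
    have hLe : ∀ i : Fin D, Lb (Eb i i) ∈ G := by
      intro i
      set v : Fin D → ℝ := fun j => if j = i then 1 else 0 with hvdef
      have hXv : Xmat D c E v ∈ G := by
        apply LieSubalgebra.subset_lieSpan
        refine ⟨v, fun j => ?_, rfl⟩
        by_cases h : j = i <;> simp [hvdef, h]
      have hdiff : Xmat D c E v - Xb M0 = Lb (c i • Eb i i) := by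
        rw [Xmat, Xb, LbL_apply, sub_eq_add_neg, fromBlocks_neg, fromBlocks_add]
        have hMd : Mmat D c E v + -M0 = c i • Eb i i := by
          rw [hM0def, Mmat, Mmat]
          have : Matrix.diagonal (fun j => c j * v j) = c i • Eb i i := by
            ext a b
            by_cases hab : a = b
            · subst hab
              by_cases hai : a = i
              · subst hai; simp [Matrix.diagonal_apply, hvdef, Eb, Matrix.single]
              · have hia : ¬ i = a := fun h => hai h.symm
                simp [Matrix.diagonal_apply, hvdef, hai, hia, Eb, Matrix.single]
            · have : ¬ (i = a ∧ i = b) := by rintro ⟨rfl, rfl⟩; exact hab rfl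
              simp [Matrix.diagonal_apply_ne _ hab, Eb, Matrix.single, this]
          rw [← this]
          simp
        rw [hMd]
        simp
      have : Lb (Eb i i) = (c i)⁻¹ • (Xmat D c E v - Xb M0) := by
        rw [hdiff, ← LinearMap.map_smul, smul_smul, inv_mul_cancel₀ (hc i), one_smul]
      rw [this]
      exact G.smul_mem _ (sub_mem hXv h0)
    -- step 2 : diagonal H blocks
    have hHe : ∀ i : Fin D, Hb (Eb i i) ∈ G := by
      intro i
      have h := G.lie_mem h0 (hLe i)
      rw [lie_Xb_Lb] at h
      have : fromBlocks (Eb i i) 0 0 (-(Eb i i)) = Hb (Eb i i) := by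
        rw [HbL_apply, Eb_transpose]
      rwa [this] at h
    -- step 3 : H of C_i := 3 e_i V0 + V0 e_i
    have hCi : ∀ i : Fin D,
        Hb (Eb i i * V0 D + Eb i i * V0 D + (Eb i i * V0 D + V0 D * Eb i i)) ∈ G := by
      intro i
      have hW := G.lie_mem (hHe i) h0
      rw [lie_Hb_Xb, Eb_transpose] at hW
      have hB := G.lie_mem hW h0
      rw [lie_UL_Xb] at hB
      have hconv : fromBlocks ((Eb i i + Eb i i) * M0 - -(Eb i i * M0 + M0 * Eb i i)) 0 0
            (-(Eb i i * M0 + M0 * Eb i i) - M0 * (Eb i i + Eb i i))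
          = Hb ((Eb i i + Eb i i) * M0 + (Eb i i * M0 + M0 * Eb i i)) := by
        rw [HbL_apply]
        refine fromBlocks_inj.mpr ⟨by abel, rfl, rfl, ?_⟩
        simp only [transpose_add, transpose_mul, hM0T, Eb_transpose, mul_add, add_mul]
        abel
      rw [hconv] at hB
      have key : Eb i i * V0 D + Eb i i * V0 D + (Eb i i * V0 D + V0 D * Eb i i)
          = ((Eb i i + Eb i i) * M0 + (Eb i i * M0 + M0 * Eb i i)) + (4*E) • Eb i i := by
        rw [hM0V]
        simp only [mul_sub, sub_mul, mul_smul_comm, smul_mul_assoc, mul_one, one_mul,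
          mul_add, add_mul]
        module
      rw [key, LinearMap.map_add, LinearMap.map_smul]
      exact G.add_mem hB (G.smul_mem _ (hHe i))
    -- step 4 : adjacent off-diagonal H blocks
    have hpair : ∀ i j : Fin D, ((i:ℕ) + 1 = j ∨ (j:ℕ) + 1 = i) →
        Hb ((3:ℝ) • Eb i j - Eb j i) ∈ G := by
      intro i j hadj
      have hne : i ≠ j := by
        intro h; subst h; omega
      have hneji : j ≠ i := hne.symm
      have hVij : V0 D i j = 1 := by simp [V0, hadj]
      have hVji : V0 D j i = 1 := by simp [V0, hadj.symm]
      have h1 : Eb i i * V0 D * Eb j j = Eb i j := by rw [Eb_mul_mul, hVij, one_smul]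
      have h2 : Eb j j * V0 D * Eb i i = Eb j i := by rw [Eb_mul_mul, hVji, one_smul]
      have h3 : Eb i i * Eb j j = (0 : Mat D) := Eb_mul_ne hne i j
      have h4 : Eb j j * Eb i i = (0 : Mat D) := Eb_mul_ne hneji j i
      have h5 : V0 D * Eb i i * Eb j j = (0 : Mat D) := by rw [mul_assoc, h3, mul_zero]
      have h6 : Eb j j * (Eb i i * V0 D) = (0 : Mat D) := by rw [← mul_assoc, h4, zero_mul]
      have h7 : Eb j j * (V0 D * Eb i i) = Eb j i := by rw [← mul_assoc]; exact h2
      have hlie := G.lie_mem (hCi i) (hHe j)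
      rw [lie_Hb_Hb] at hlie
      have hcomp : (Eb i i * V0 D + Eb i i * V0 D + (Eb i i * V0 D + V0 D * Eb i i)) * Eb j j
            - Eb j j * (Eb i i * V0 D + Eb i i * V0 D + (Eb i i * V0 D + V0 D * Eb i i))
          = (3:ℝ) • Eb i j - Eb j i := by
        simp only [add_mul, mul_add, h1, h5, h6, h7, add_zero, zero_add]
        module
      rwa [hcomp] at hlie
    have hadjmem : ∀ i j : Fin D, ((i:ℕ) + 1 = j ∨ (j:ℕ) + 1 = i) →
        Hb (Eb i j) ∈ G := by
      intro i j hadj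
      have ha := hpair i j hadj
      have hb := hpair j i hadj.symm
      have key : Eb i j = (8:ℝ)⁻¹ • ((3:ℝ) • ((3:ℝ) • Eb i j - Eb j i)
          + ((3:ℝ) • Eb j i - Eb i j)) := by module
      rw [key, LinearMap.map_smul]
      refine G.smul_mem _ ?_
      rw [LinearMap.map_add, LinearMap.map_smul]
      exact G.add_mem (G.smul_mem _ ha) hb
    -- step 5 : all off-diagonal H blocks by induction on the distance
    have hstep : ∀ n : ℕ, ∀ i j : Fin D,
        ((i:ℕ) + n + 1 = j ∨ (j:ℕ) + n + 1 = i) → Hb (Eb i j) ∈ G := by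
      intro n
      induction n with
      | zero =>
        intro i j h
        exact hadjmem i j (by omega)
      | succ n ih =>
        intro i j h
        rcases h with h | h
        · have hk : (i:ℕ) + n + 1 < D := by omega
          set k : Fin D := ⟨(i:ℕ) + n + 1, hk⟩ with hkdef
          have hik : Hb (Eb i k) ∈ G := ih i k (Or.inl rfl)
          have hkj : Hb (Eb k j) ∈ G := hadjmem k j (Or.inl (by simp [hkdef]; omega))
          have hlie := G.lie_mem hik hkj
          rw [lie_Hb_Hb] at hlie
          have hne : j ≠ i := by intro hji; omega
          rwa [Eb_mul_same, Eb_mul_ne hne, sub_zero] at hlie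
        · have hk : (j:ℕ) + n + 1 < D := by omega
          set k : Fin D := ⟨(j:ℕ) + n + 1, hk⟩ with hkdef
          have hkj : Hb (Eb k j) ∈ G := ih k j (Or.inr rfl)
          have hik : Hb (Eb i k) ∈ G := hadjmem i k (Or.inr (by simp [hkdef]; omega))
          have hlie := G.lie_mem hik hkj
          rw [lie_Hb_Hb] at hlie
          have hne : j ≠ i := by intro hji; omega
          rwa [Eb_mul_same, Eb_mul_ne hne, sub_zero] at hlie
    have hHball : ∀ i j : Fin D, Hb (Eb i j) ∈ G := by
      intro i j
      by_cases h : i = j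
      · subst h; exact hHe i
      · have hv : (i:ℕ) ≠ (j:ℕ) := fun hv => h (Fin.ext hv)
        rcases Nat.lt_or_ge (i:ℕ) (j:ℕ) with hlt | hge
        · exact hstep ((j:ℕ) - (i:ℕ) - 1) i j (Or.inl (by omega))
        · exact hstep ((i:ℕ) - (j:ℕ) - 1) i j (Or.inr (by omega))
    -- step 6 : all H blocks
    have hH : ∀ A : Mat D, Hb A ∈ G := by
      intro A
      induction A using Matrix.induction_on' with
      | h_zero => rw [map_zero]; exact G.zero_mem'
      | h_add p q hp hq => rw [LinearMap.map_add]; exact G.add_mem hp hq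
      | h_std_basis i j x =>
        have : Matrix.single i j x = x • Eb i j := by
          rw [Eb, smul_single, smul_eq_mul, mul_one]
        rw [this, LinearMap.map_smul]
        exact G.smul_mem _ (hHball i j)
    -- step 7 : all symmetric L blocks
    have hLp : ∀ k l : Fin D, Lb (Eb k l + Eb l k) ∈ G := by
      intro k l
      have hlie := G.lie_mem (hHball k l) (hLe k)
      rw [lie_Hb_Lb, Eb_transpose, Eb_mul_same, Eb_mul_same, LinearMap.map_neg] at hlie
      have := neg_mem hlie
      rw [neg_neg] at this
      rwa [add_comm] at this
    have hL : ∀ S : Mat D, Sᵀ = S → Lb S ∈ G := fun S hS => sym_span (LbL D) G hLp S hS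
    -- step 8 : all symmetric U blocks
    have hU1 : Ub (1 : Mat D) ∈ G := by
      have hLM0 : Lb M0 ∈ G := hL M0 hM0T
      have : Ub (1 : Mat D) = Xb M0 - Lb M0 := by
        rw [UbL_apply, LbL_apply, Xb, sub_eq_add_neg, fromBlocks_neg, fromBlocks_add]
        simp
      rw [this]
      exact sub_mem h0 hLM0
    have hUp : ∀ k l : Fin D, Ub (Eb k l + Eb l k) ∈ G := by
      intro k l
      have hlie := G.lie_mem (hHball k l) hU1
      rwa [lie_Hb_Ub, mul_one, one_mul, Eb_transpose] at hlie
    have hU : ∀ S : Mat D, Sᵀ = S → Ub S ∈ G := fun S hS => sym_span (UbL D) G hUp S hS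
    -- conclusion
    obtain ⟨A, B, C, hB, hC, hXeq⟩ := sp_decomp X hX
    rw [hXeq]
    exact G.add_mem (G.add_mem (hH A) (hU B hB)) (hL C hC)
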